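/- Let h > 0, Δt > 0, r ∈ ℝ, and let k_a ≤ k_b be integers; set G := {r + k·h : k ∈ ℤ, k_a ≤ k ≤ k_b}. Let Φ̃⁺, Φ̃⁻ : G → ℝ satisfy c₀ ≤ Φ̃^±(x) ≤ C for all x ∈ G, where 0 < c₀ ≤ C. Suppose w₀ : G → ℝ satisfies |w₀(x + h) − w₀(x)| ≤ K·h whenever x, x + h ∈ G, and suppose w : G → ℝ solves the resolvent equation w(x) − Δt·(H̃_h w)(x) = w₀(x) for all x ∈ G. Then there exists a constant C₃ > 0 depending only on c₀, C and K (and not on h, Δt, r, k_a, k_b) such that |w(x + h) − w(x)| ≤ C₃·h whenever x, x + h ∈ G. -/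

import Mathlib

open scoped Classical

noncomputable section

/-- The one-dimensional grid `{r + k·h : k ∈ ℤ, k_a ≤ k ≤ k_b}`. -/
def grid1 (h r : ℝ) (ka kb : ℤ) : Set ℝ :=
  {x : ℝ | ∃ k : ℤ, ka ≤ k ∧ k ≤ kb ∧ x = r + (k : ℝ) * h}

/-- The one-dimensional state-constrained discrete Hamiltonian `H̃_h` on a grid
`G` with spacing `h`. -/
def ham1d (h : ℝ) (G : Set ℝ) (Φp Φm : ℝ → ℝ) (w : ℝ → ℝ) (x : ℝ) : ℝ :=
  (if x + h ∈ G then Φp x * (Real.exp ((w (x + h) - w x) / h) - 1) else 0)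
    + (if x - h ∈ G then Φm x * (Real.exp ((w (x - h) - w x) / h) - 1) else 0)

lemma aux_pos (c0 C τ Λ h Δt : ℝ) (ka kb : ℤ) (Fp Fm W W0 : ℤ → ℝ)
    (hc0 : 0 < c0) (hC : 0 < C) (hh : 0 < h) (hΔt : 0 < Δt)
    (hτ0 : 0 ≤ τ) (hΛτ : τ ≤ Λ)
    (hΛ : 2*C + C*Real.exp τ ≤ c0*(Real.exp Λ - 1))
    (hFp : ∀ k : ℤ, ka ≤ k → k ≤ kb → c0 ≤ Fp k ∧ Fp k ≤ C)
    (hFm : ∀ k : ℤ, ka ≤ k → k ≤ kb → c0 ≤ Fm k ∧ Fm k ≤ C)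
    (hlip : ∀ k : ℤ, ka ≤ k → k+1 ≤ kb → |W0 (k+1) - W0 k| ≤ τ*h)
    (Heq : ∀ k : ℤ, ka ≤ k → k ≤ kb → W k - W0 k =
      Δt * ((if k+1 ≤ kb then Fp k * (Real.exp ((W (k+1) - W k)/h) - 1) else 0)
        + (if ka ≤ k-1 then Fm k * (Real.exp ((W (k-1) - W k)/h) - 1) else 0)))
    (k0 : ℤ) (hk0a : ka ≤ k0) (hk0b : k0 + 1 ≤ kb) :
    W (k0+1) - W k0 ≤ Λ * h := by
  by_contra hcon
  push_neg at hcon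
  -- upper bound on the Hamiltonian
  have HHub : ∀ k : ℤ, ka ≤ k → k ≤ kb → W k - W0 k ≤
      Δt * ((if k+1 ≤ kb then C * Real.exp ((W (k+1) - W k)/h) else 0)
        + (if ka ≤ k-1 then C * Real.exp ((W (k-1) - W k)/h) else 0)) := by
    intro k h1 h2
    rw [Heq k h1 h2]
    apply mul_le_mul_of_nonneg_left ?_ hΔt.le
    have hbp := hFp k h1 h2
    have hbm := hFm k h1 h2
    apply add_le_add
    · split_ifs with hc
      · have he := Real.exp_pos ((W (k+1) - W k)/h)
        nlinarith
      · exact le_rfl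
    · split_ifs with hc
      · have he := Real.exp_pos ((W (k-1) - W k)/h)
        nlinarith
      · exact le_rfl
  -- lower bound using the up-term
  have HHlbp : ∀ k : ℤ, ka ≤ k → k+1 ≤ kb → 0 ≤ W (k+1) - W k →
      Δt * (c0 * (Real.exp ((W (k+1) - W k)/h) - 1) - C) ≤ W k - W0 k := by
    intro k h1 h2 h3
    rw [Heq k h1 (by omega)]
    apply mul_le_mul_of_nonneg_left ?_ hΔt.le
    have hbp := hFp k h1 (by omega)
    have he1 : 1 ≤ Real.exp ((W (k+1) - W k)/h) :=
      Real.one_le_exp (div_nonneg h3 hh.le)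
    rw [if_pos h2]
    have t2 : -C ≤ (if ka ≤ k-1 then Fm k * (Real.exp ((W (k-1) - W k)/h) - 1) else 0) := by
      split_ifs with hc
      · have hbm := hFm k h1 (by omega)
        have he := Real.exp_pos ((W (k-1) - W k)/h)
        nlinarith
      · linarith
    nlinarith
  have hτΛh : τ * h ≤ Λ * h := mul_le_mul_of_nonneg_right hΛτ hh.le
  have hτh0 : 0 ≤ τ * h := mul_nonneg hτ0 hh.le
  -- main induction: the steep slope propagates to the right boundary
  have main : ∀ j : ℤ, k0 ≤ j → j ≤ kb - 1 →
      (τ*h ≤ W (j+1) - W j ∧ Δt * (c0 * (Real.exp Λ - 1) - C) ≤ W (j+1) - W0 (j+1)) := by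
    refine fun j hj => Int.le_induction (motive := fun j _ => j ≤ kb - 1 →
      (τ*h ≤ W (j+1) - W j ∧ Δt * (c0 * (Real.exp Λ - 1) - C) ≤ W (j+1) - W0 (j+1)))
      ?_ ?_ j hj
    ·
      intro _
      have hD0 : 0 ≤ W (k0+1) - W k0 := by linarith
      have e1 : Λ ≤ (W (k0+1) - W k0)/h := by
        rw [le_div_iff₀ hh]; linarith
      have e2 : Real.exp Λ ≤ Real.exp ((W (k0+1) - W k0)/h) := Real.exp_le_exp.mpr e1
      have l1 := HHlbp k0 hk0a hk0b hD0
      have l2 := abs_le.mp (hlip k0 hk0a hk0b)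
      have l3 : Δt * (c0 * (Real.exp Λ - 1) - C) ≤
          Δt * (c0 * (Real.exp ((W (k0+1) - W k0)/h) - 1) - C) := by
        apply mul_le_mul_of_nonneg_left ?_ hΔt.le
        nlinarith
      constructor
      · linarith
      · linarith
    · intro j hj ih
      intro hside
      obtain ⟨a1, b1⟩ := ih (by omega)
      have hub := HHub (j+1) (by omega) (by omega)
      rw [if_pos (show j+1+1 ≤ kb by omega), if_pos (show ka ≤ j+1-1 by omega),
        show j+1-1 = j from by omega] at hub
      have hmono : c0 * (Real.exp Λ - 1) - C ≤
          C * Real.exp ((W (j+1+1) - W (j+1))/h) + C * Real.exp ((W j - W (j+1))/h) :=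
        (mul_le_mul_iff_of_pos_left hΔt).mp (le_trans b1 hub)
      have h2 : (W j - W (j+1))/h ≤ 0 := by
        apply div_nonpos_of_nonpos_of_nonneg ?_ hh.le
        linarith
      have h2' : Real.exp ((W j - W (j+1))/h) ≤ 1 := Real.exp_le_one_iff.mpr h2
      have h3 : C * Real.exp τ ≤ C * Real.exp ((W (j+1+1) - W (j+1))/h) := by nlinarith
      have h4 : τ ≤ (W (j+1+1) - W (j+1))/h :=
        Real.exp_le_exp.mp ((mul_le_mul_iff_of_pos_left hC).mp h3)
      have a2 : τ*h ≤ W (j+1+1) - W (j+1) := by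
        rw [← le_div_iff₀ hh]; exact h4
      refine ⟨a2, ?_⟩
      have hl := abs_le.mp (hlip (j+1) (by omega) (by omega))
      linarith
  -- termination at the right boundary
  obtain ⟨a, b⟩ := main (kb-1) (by omega) (by omega)
  rw [show kb-1+1 = kb from by omega] at a b
  have hub := HHub kb (by omega) (by omega)
  rw [if_neg (show ¬(kb+1 ≤ kb) from by omega), if_pos (show ka ≤ kb-1 from by omega)] at hub
  have h2 : (W (kb-1) - W kb)/h ≤ 0 := by
    apply div_nonpos_of_nonpos_of_nonneg ?_ hh.le
    linarith
  have h2' : Real.exp ((W (kb-1) - W kb)/h) ≤ 1 := Real.exp_le_one_iff.mpr h2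
  have hfin : c0 * (Real.exp Λ - 1) - C ≤ 0 + C * Real.exp ((W (kb-1) - W kb)/h) :=
    (mul_le_mul_iff_of_pos_left hΔt).mp (le_trans b hub)
  have he := Real.exp_pos τ
  nlinarith

/-- **Uniform discrete Lipschitz bound for the resolvent problem**: if the rates
are bounded between `c₀` and `C` and the datum `w₀` has discrete Lipschitz
constant `K`, then any solution `w` of `w − Δt·H̃_h w = w₀` on the grid has
discrete Lipschitz constant `C₃` depending only on `c₀`, `C`, `K` (and not on
`h`, `Δt`, `r`, `k_a`, `k_b`). -/
theorem resolvent_discrete_lipschitz_bound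
    (c0 C K : ℝ) (hc0 : 0 < c0) (hcC : c0 ≤ C) :
    ∃ C3 > 0, ∀ (h Δt r : ℝ) (ka kb : ℤ) (Φp Φm w0 w : ℝ → ℝ),
      0 < h → 0 < Δt → ka ≤ kb →
      (∀ x ∈ grid1 h r ka kb, c0 ≤ Φp x ∧ Φp x ≤ C ∧ c0 ≤ Φm x ∧ Φm x ≤ C) →
      (∀ x : ℝ, x ∈ grid1 h r ka kb → x + h ∈ grid1 h r ka kb →
        |w0 (x + h) - w0 x| ≤ K * h) →
      (∀ x ∈ grid1 h r ka kb,
        w x - Δt * ham1d h (grid1 h r ka kb) Φp Φm w x = w0 x) →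
      ∀ x : ℝ, x ∈ grid1 h r ka kb → x + h ∈ grid1 h r ka kb →
        |w (x + h) - w x| ≤ C3 * h := by
  have hC : 0 < C := lt_of_lt_of_le hc0 hcC
  set τ : ℝ := |K| + 1 with hτdef
  set Λ : ℝ := τ + (2*C + C*Real.exp τ)/c0 with hΛdef
  have hτ0 : (0:ℝ) ≤ τ := by have := abs_nonneg K; rw [hτdef]; linarith
  have hQpos : 0 < (2*C + C*Real.exp τ)/c0 :=
    div_pos (by nlinarith [Real.exp_pos τ]) hc0
  have hΛτ : τ ≤ Λ := by rw [hΛdef]; linarith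
  have hΛnum : 2*C + C*Real.exp τ ≤ c0*(Real.exp Λ - 1) := by
    have h1 : Λ + 1 ≤ Real.exp Λ := Real.add_one_le_exp Λ
    have h3 : c0 * Λ ≤ c0 * (Real.exp Λ - 1) := by
      linarith [mul_le_mul_of_nonneg_left h1 hc0.le]
    have h4 : c0 * Λ = c0 * τ + (2*C + C*Real.exp τ) := by
      rw [hΛdef]; field_simp
    linarith [h3, h4, mul_nonneg hc0.le hτ0]
  refine ⟨Λ, by rw [hΛdef]; linarith [hτ0, hQpos], ?_⟩
  intro h Δt r ka kb Φp Φm w0 w hh hΔt hkab hΦ hw0 heq x hx hxh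
  -- grid membership characterization
  have hmem : ∀ k : ℤ, (r + (k:ℝ)*h ∈ grid1 h r ka kb) ↔ (ka ≤ k ∧ k ≤ kb) := by
    intro k
    constructor
    · rintro ⟨k', h1, h2, h3⟩
      have hkk : (k':ℝ) = (k:ℝ) := by
        have h4 : (k:ℝ)*h = (k':ℝ)*h := by linarith
        exact (mul_right_cancel₀ (ne_of_gt hh) h4.symm)
      have : k' = k := by exact_mod_cast hkk
      subst this
      exact ⟨h1, h2⟩
    · intro ⟨h1, h2⟩
      exact ⟨k, h1, h2, rfl⟩
  obtain ⟨k0, hka0, hkb0', hxeq⟩ := hx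
  subst hxeq
  have e0 : r + (k0:ℝ)*h + h = r + ((k0+1:ℤ):ℝ)*h := by push_cast; ring
  rw [e0] at hxh ⊢
  have hkb0 : k0 + 1 ≤ kb := ((hmem _).mp hxh).2
  -- ℤ-indexed form of the equation
  have HeqZ : ∀ k : ℤ, ka ≤ k → k ≤ kb →
      w (r + (k:ℝ)*h) - w0 (r + (k:ℝ)*h) =
      Δt * ((if k+1 ≤ kb then Φp (r + (k:ℝ)*h) *
              (Real.exp ((w (r + ((k+1:ℤ):ℝ)*h) - w (r + (k:ℝ)*h))/h) - 1) else 0)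
        + (if ka ≤ k-1 then Φm (r + (k:ℝ)*h) *
              (Real.exp ((w (r + ((k-1:ℤ):ℝ)*h) - w (r + (k:ℝ)*h))/h) - 1) else 0)) := by
    intro k h1 h2
    have hxk : r + (k:ℝ)*h ∈ grid1 h r ka kb := (hmem k).mpr ⟨h1, h2⟩
    have E := heq _ hxk
    unfold ham1d at E
    have e1 : r + (k:ℝ)*h + h = r + ((k+1:ℤ):ℝ)*h := by push_cast; ring
    have e2 : r + (k:ℝ)*h - h = r + ((k-1:ℤ):ℝ)*h := by push_cast; ring
    rw [e1, e2] at E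
    split_ifs with hc1 hc2 hc2
    · rw [if_pos ((hmem _).mpr ⟨by omega, hc1⟩), if_pos ((hmem _).mpr ⟨hc2, by omega⟩)] at E
      linarith
    · rw [if_pos ((hmem _).mpr ⟨by omega, hc1⟩),
        if_neg (fun hm => hc2 ((hmem _).mp hm).1)] at E
      linarith
    · rw [if_neg (fun hm => hc1 ((hmem _).mp hm).2), if_pos ((hmem _).mpr ⟨hc2, by omega⟩)] at E
      linarith
    · rw [if_neg (fun hm => hc1 ((hmem _).mp hm).2),
        if_neg (fun hm => hc2 ((hmem _).mp hm).1)] at E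
      linarith
  -- discrete Lipschitz bound for the datum, with constant τ
  have lipZ : ∀ m : ℤ, ka ≤ m → m+1 ≤ kb →
      |w0 (r + ((m+1:ℤ):ℝ)*h) - w0 (r + (m:ℝ)*h)| ≤ τ*h := by
    intro m h1 h2
    have e1 : r + (m:ℝ)*h + h = r + ((m+1:ℤ):ℝ)*h := by push_cast; ring
    have hm1 : r + (m:ℝ)*h ∈ grid1 h r ka kb := (hmem m).mpr ⟨h1, by omega⟩
    have hm2 : r + (m:ℝ)*h + h ∈ grid1 h r ka kb := by
      rw [e1]; exact (hmem _).mpr ⟨by omega, h2⟩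
    have := hw0 _ hm1 hm2
    rw [e1] at this
    have hK : K * h ≤ τ * h :=
      mul_le_mul_of_nonneg_right (by rw [hτdef]; linarith [le_abs_self K]) hh.le
    linarith [this]
  -- bounds on the rates
  have FpZ : ∀ k : ℤ, ka ≤ k → k ≤ kb → c0 ≤ Φp (r + (k:ℝ)*h) ∧ Φp (r + (k:ℝ)*h) ≤ C := by
    intro k h1 h2
    have := hΦ _ ((hmem k).mpr ⟨h1, h2⟩)
    exact ⟨this.1, this.2.1⟩
  have FmZ : ∀ k : ℤ, ka ≤ k → k ≤ kb → c0 ≤ Φm (r + (k:ℝ)*h) ∧ Φm (r + (k:ℝ)*h) ≤ C := by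
    intro k h1 h2
    have := hΦ _ ((hmem k).mpr ⟨h1, h2⟩)
    exact ⟨this.2.2.1, this.2.2.2⟩
  -- upper bound: apply aux_pos directly
  have upper : w (r + ((k0+1:ℤ):ℝ)*h) - w (r + (k0:ℝ)*h) ≤ Λ * h := by
    exact aux_pos c0 C τ Λ h Δt ka kb
      (fun k => Φp (r + (k:ℝ)*h)) (fun k => Φm (r + (k:ℝ)*h))
      (fun k => w (r + (k:ℝ)*h)) (fun k => w0 (r + (k:ℝ)*h))
      hc0 hC hh hΔt hτ0 hΛτ hΛnum FpZ FmZ lipZ HeqZ k0 hka0 hkb0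
  -- lower bound: apply aux_pos to the reflected grid
  have lower : w (r + (k0:ℝ)*h) - w (r + ((k0+1:ℤ):ℝ)*h) ≤ Λ * h := by
    have refl := aux_pos c0 C τ Λ h Δt ka kb
      (fun k => Φm (r + ((ka+kb-k:ℤ):ℝ)*h)) (fun k => Φp (r + ((ka+kb-k:ℤ):ℝ)*h))
      (fun k => w (r + ((ka+kb-k:ℤ):ℝ)*h)) (fun k => w0 (r + ((ka+kb-k:ℤ):ℝ)*h))
      hc0 hC hh hΔt hτ0 hΛτ hΛnum
      (fun k h1 h2 => FmZ (ka+kb-k) (by omega) (by omega))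
      (fun k h1 h2 => FpZ (ka+kb-k) (by omega) (by omega))
      ?_ ?_ (ka+kb-k0-1) (by omega) (by omega)
    · have ea : ((ka+kb-(ka+kb-k0-1+1):ℤ):ℝ) = ((k0:ℤ):ℝ) := by push_cast; ring
      have eb : ((ka+kb-(ka+kb-k0-1):ℤ):ℝ) = ((k0+1:ℤ):ℝ) := by push_cast; ring
      rw [ea, eb] at refl
      exact_mod_cast refl
    · -- reflected Lipschitz bound
      intro k h1 h2
      have el : ((ka+kb-(k+1):ℤ):ℝ) = ((ka+kb-k-1:ℤ):ℝ) := by push_cast; ring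
      have er : ((ka+kb-k:ℤ):ℝ) = (((ka+kb-k-1)+1:ℤ):ℝ) := by push_cast; ring
      rw [el, er, abs_sub_comm]
      exact lipZ (ka+kb-k-1) (by omega) (by omega)
    · -- reflected equation
      intro k h1 h2
      have E := HeqZ (ka+kb-k) (by omega) (by omega)
      have e1 : ((ka+kb-k+1:ℤ):ℝ) = ((ka+kb-(k-1):ℤ):ℝ) := by push_cast; ring
      have e2 : ((ka+kb-k-1:ℤ):ℝ) = ((ka+kb-(k+1):ℤ):ℝ) := by push_cast; ring
      rw [e1, e2] at E
      split_ifs with hc1 hc2 hc2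
      · rw [if_pos (show ka+kb-k+1 ≤ kb by omega),
          if_pos (show ka ≤ ka+kb-k-1 by omega)] at E
        linarith
      · rw [if_neg (show ¬(ka+kb-k+1 ≤ kb) by omega),
          if_pos (show ka ≤ ka+kb-k-1 by omega)] at E
        linarith
      · rw [if_pos (show ka+kb-k+1 ≤ kb by omega),
          if_neg (show ¬(ka ≤ ka+kb-k-1) by omega)] at E
        linarith
      · rw [if_neg (show ¬(ka+kb-k+1 ≤ kb) by omega),
          if_neg (show ¬(ka ≤ ka+kb-k-1) by omega)] at E
        linarith
  rw [abs_le]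
  constructor
  · linarith
  · exact upper
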